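/- For every index i and every sequence s = (s_j) with 0 ≤ s_j ≤ 1, the dual generating function satisfies f_i(sq)/q_i = ĥ_{i0} + (∑_j ĥ_{ij} s_j)/(1+m̂ − m̂ ∑_j ĝ_j s_j), where sq denotes the sequence with entries s_j q_j; moreover ∑_j ĝ_j = 1 and ∑_j ĥ_{ij} = 1 − ĥ_{i0} for every i, so the dual parameters again form a linear-fractional triplet. -/

import Mathlib

/-- The linear-fractional generating function
`f_i(s) = h_{i0} + (∑_j h_{ij} s_j) / (1 + m - m ∑_j g_j s_j)` with `h_{i0} = 1 - ∑_j h_{ij}`. -/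
noncomputable def lfGen (H : ℕ → ℕ → ℝ) (g : ℕ → ℝ) (m : ℝ) (i : ℕ) (s : ℕ → ℝ) : ℝ :=
  (1 - ∑' j, H i j) + (∑' j, H i j * s j) / (1 + m - m * ∑' j, g j * s j)

/-- the dual reproduction law `f_i(sq)/q_i` is again linear-fractional, with
parameters `m̂ = (1+m-ρ)/ρ`, `ĝ_j = m g_j q_j/(1+m-ρ)`, `ĥ_{i0} = h_{i0}/q_i`,
`ĥ_{ij} = h_{ij} q_j/(q_i ρ)`; moreover `∑_j ĝ_j = 1` and `∑_j ĥ_{ij} = 1 - ĥ_{i0}`. -/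
theorem dual_reproduction_law_is_linear_fractional
    (H : ℕ → ℕ → ℝ) (g q : ℕ → ℝ) (m ρ : ℝ)
    (hH : ∀ i j, 0 ≤ H i j) (hHsum : ∀ i, Summable (H i)) (hHrow : ∀ i, ∑' j, H i j ≤ 1)
    (hg : ∀ j, 0 ≤ g j) (hgsum : Summable g) (hg1 : ∑' j, g j = 1)
    (hm : 0 < m) (hρ1 : 1 < ρ) (hρm : ρ < 1 + m)
    (hq0 : ∀ i, 0 < q i) (hq1 : ∀ i, q i < 1)
    (hfix : ∀ i, lfGen H g m i q = q i)
    (hgq : ∑' j, g j * q j = (1 + m - ρ) / m) :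
    (∀ i, ∀ s : ℕ → ℝ, (∀ j, s j ∈ Set.Icc (0:ℝ) 1) →
        lfGen H g m i (fun j => s j * q j) / q i
          = (1 - ∑' l, H i l) / q i
            + (∑' j, (H i j * q j / (q i * ρ)) * s j)
              / (1 + (1 + m - ρ) / ρ
                  - (1 + m - ρ) / ρ * ∑' j, (m * g j * q j / (1 + m - ρ)) * s j))
    ∧ (∑' j, m * g j * q j / (1 + m - ρ)) = 1
    ∧ ∀ i, (∑' j, H i j * q j / (q i * ρ)) = 1 - (1 - ∑' l, H i l) / q i := by
  have hρ0 : (0:ℝ) < ρ := lt_trans one_pos hρ1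
  have hmρ : (0:ℝ) < 1 + m - ρ := by linarith
  refine ⟨?_, ?_, ?_⟩
  · intro i s hs
    have hq := hq0 i
    have e1 : (∑' j, (H i j * q j / (q i * ρ)) * s j)
        = (q i * ρ)⁻¹ * ∑' j, H i j * (s j * q j) := by
      rw [← tsum_mul_left]
      exact tsum_congr fun j => by field_simp
    have e2 : (∑' j, (m * g j * q j / (1 + m - ρ)) * s j)
        = (m / (1 + m - ρ)) * ∑' j, g j * (s j * q j) := by
      rw [← tsum_mul_left]
      exact tsum_congr fun j => by field_simp
    rw [e1, e2]
    set A := ∑' j, H i j * (s j * q j) with hA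
    set B := ∑' j, g j * (s j * q j) with hB
    have hB1 : B ≤ 1 := by
      rw [← hg1]
      apply Summable.tsum_le_tsum _ _ hgsum
      · intro j
        have h1 : s j * q j ≤ 1 :=
          mul_le_one₀ (hs j).2 (hq0 j).le (hq1 j).le
        nlinarith [hg j, (hs j).1, (hq0 j).le]
      · exact hgsum.of_nonneg_of_le
          (fun j => mul_nonneg (hg j) (mul_nonneg (hs j).1 (hq0 j).le))
          (fun j => by
            have h1 : s j * q j ≤ 1 :=
              mul_le_one₀ (hs j).2 (hq0 j).le (hq1 j).le
            nlinarith [hg j, (hs j).1, (hq0 j).le])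
    have hD : (0:ℝ) < 1 + m - m * B := by nlinarith
    have hden : 1 + (1 + m - ρ) / ρ - (1 + m - ρ) / ρ * (m / (1 + m - ρ) * B)
        = (1 + m - m * B) / ρ := by
      field_simp
      ring
    rw [hden]
    show ((1 - ∑' j, H i j) + A / (1 + m - m * B)) / q i
        = (1 - ∑' l, H i l) / q i + (q i * ρ)⁻¹ * A / ((1 + m - m * B) / ρ)
    field_simp
  · have e2 : (∑' j, m * g j * q j / (1 + m - ρ))
        = (m / (1 + m - ρ)) * ∑' j, g j * q j := by
      rw [← tsum_mul_left]
      exact tsum_congr fun j => by field_simp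
    rw [e2, hgq]
    field_simp
  · intro i
    have hfi := hfix i
    unfold lfGen at hfi
    rw [hgq] at hfi
    have hden : 1 + m - m * ((1 + m - ρ) / m) = ρ := by field_simp; ring
    rw [hden] at hfi
    have e1 : (∑' j, H i j * q j / (q i * ρ)) = (q i * ρ)⁻¹ * ∑' j, H i j * q j := by
      rw [← tsum_mul_left]
      exact tsum_congr fun j => by ring
    rw [e1]
    have hq := hq0 i
    have hAq : (∑' j, H i j * q j) = (q i - (1 - ∑' j, H i j)) * ρ := by
      have := hfi
      field_simp at this ⊢
      linarith
    rw [hAq]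
    field_simp
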